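/- A measure μ is weakly localisable if and only if for every band M in L_p(μ) (1 ≤ p < ∞) there exists a locally measurable set Ω₀ such that the band projection P onto M satisfies Pf = 1_{Ω₀}·f for all f ∈ L_p(μ). -/

import Mathlib

open MeasureTheory Set ENNReal

/-- A set `B` is locally measurable if `B ∩ A` is measurable for every measurable set `A`
of finite measure. -/
def LocallyMeasurable {Ω : Type*} [MeasurableSpace Ω] (μ : Measure Ω) (B : Set Ω) : Prop :=
  ∀ A : Set Ω, MeasurableSet A → μ A < ∞ → MeasurableSet (B ∩ A)

/-- A measure space is weakly localisable if every consistent family of measurable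
functions `f_A : A → ℝ`, indexed by the measurable sets `A` of finite measure, is
realised `μ`-a.e. on each `A` by a single locally measurable function. -/
def WeaklyLocalisable {Ω : Type*} [MeasurableSpace Ω] (μ : Measure Ω) : Prop :=
  ∀ f : Set Ω → Ω → ℝ,
    (∀ A : Set Ω, MeasurableSet A → μ A < ∞ → Measurable (A.indicator (f A))) →
    (∀ A B : Set Ω, MeasurableSet A → μ A < ∞ → MeasurableSet B → μ B < ∞ →
      ∀ᵐ x ∂(μ.restrict (A ∩ B)), f A x = f B x) →
    ∃ g : Ω → ℝ, (∀ A : Set Ω, MeasurableSet A → μ A < ∞ → Measurable (A.indicator g)) ∧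
      ∀ A : Set Ω, MeasurableSet A → μ A < ∞ → ∀ᵐ x ∂(μ.restrict A), g x = f A x

/-- A band in `L_p(μ)`: a linear subspace which is a lattice ideal and is closed under
suprema of arbitrary subsets (whenever the supremum exists). -/
def IsBand {Ω : Type*} [MeasurableSpace Ω] {μ : Measure Ω} {p : ℝ≥0∞} [Fact (1 ≤ p)]
    (M : Set (Lp ℝ p μ)) : Prop :=
  (0 : Lp ℝ p μ) ∈ M ∧
  (∀ f ∈ M, ∀ g ∈ M, f + g ∈ M) ∧
  (∀ (c : ℝ), ∀ f ∈ M, c • f ∈ M) ∧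
  (∀ f ∈ M, ∀ g : Lp ℝ p μ, |g| ≤ |f| → g ∈ M) ∧
  (∀ S : Set (Lp ℝ p μ), S ⊆ M → ∀ b : Lp ℝ p μ, IsLUB S b → b ∈ M)

/-- `P` is the band projection onto `M`: a bounded linear projection with range `M`,
fixing `M`, and satisfying `0 ≤ P ≤ I`. -/
def IsBandProjection {Ω : Type*} [MeasurableSpace Ω] {μ : Measure Ω} {p : ℝ≥0∞}
    [Fact (1 ≤ p)] (M : Set (Lp ℝ p μ)) (P : Lp ℝ p μ →L[ℝ] Lp ℝ p μ) : Prop :=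
  (∀ f : Lp ℝ p μ, P f ∈ M) ∧ (∀ f ∈ M, P f = f) ∧
  (∀ f : Lp ℝ p μ, 0 ≤ f → 0 ≤ P f ∧ P f ≤ f)

open NNReal

section BP
variable {Ω : Type*} [MeasurableSpace Ω] {μ : Measure Ω} {p : ℝ≥0∞} [Fact (1 ≤ p)]
  {M : Set (Lp ℝ p μ)} {P Q : Lp ℝ p μ →L[ℝ] Lp ℝ p μ}

lemma IsBandProjection.mono (hP : IsBandProjection M P) {f g : Lp ℝ p μ} (h : f ≤ g) :
    P f ≤ P g := by
  have h0 : (0 : Lp ℝ p μ) ≤ g - f := by rwa [sub_nonneg]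
  have := (hP.2.2 _ h0).1
  have h2 : P (g - f) = P g - P f := by rw [map_sub]
  rw [h2, sub_nonneg] at this
  exact this

lemma IsBandProjection.squeeze (hP : IsBandProjection M P)
    {u w : Lp ℝ p μ} (hw : w ∈ M) (hw0 : 0 ≤ w) (hwu : w ≤ u - P u) : w = 0 := by
  have hfix : P w = w := hP.2.1 w hw
  have hPu : P (P u) = P u := hP.2.1 _ (hP.1 u)
  have : P w ≤ P (u - P u) := hP.mono hwu
  rw [map_sub, hPu, sub_self, hfix] at this
  exact le_antisymm this hw0

lemma IsBandProjection.unique (hP : IsBandProjection M P)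
    (hQ : IsBandProjection M Q) (f : Lp ℝ p μ) : P f = Q f := by
  have key : ∀ u : Lp ℝ p μ, 0 ≤ u → Q u = P u := by
    intro u hu
    have huP : 0 ≤ u - P u := by rw [sub_nonneg]; exact (hP.2.2 u hu).2
    have h1 : Q (u - P u) = 0 :=
      hP.squeeze (hQ.1 _) (hQ.2.2 _ huP).1 (hQ.2.2 _ huP).2
    have h2 : Q (P u) = P u := hQ.2.1 _ (hP.1 u)
    have : Q u = Q (P u) + Q (u - P u) := by rw [← map_add, add_sub_cancel]
    rw [this, h1, h2, add_zero]
  have hdecomp : f = f⁺ - f⁻ := (posPart_sub_negPart f).symm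
  conv_lhs => rw [hdecomp]
  conv_rhs => rw [hdecomp]
  rw [map_sub, map_sub, key _ (posPart_nonneg f), key _ (negPart_nonneg f)]

variable (P) in
/-- The "projected part" of a finite measure set. -/
def projSet (A : Set Ω) (hA : MeasurableSet A) (hμA : μ A < ∞) : Set Ω :=
  A ∩ {x | (1:ℝ)/2 < (P (indicatorConstLp p hA hμA.ne (1:ℝ)) : Ω → ℝ) x}

lemma projSet_measurable {A : Set Ω} (hA : MeasurableSet A) (hμA : μ A < ∞) :
    MeasurableSet (projSet P A hA hμA) :=
  hA.inter (measurableSet_lt measurable_const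
    (Lp.stronglyMeasurable (P (indicatorConstLp p hA hμA.ne (1:ℝ)))).measurable)

lemma projSet_subset {A : Set Ω} (hA : MeasurableSet A) (hμA : μ A < ∞) :
    projSet P A hA hμA ⊆ A := inter_subset_left

/-- `P 1_A` is a.e. the indicator of `projSet`. -/
lemma coeFn_proj_indicatorConst (hM : IsBand M) (hP : IsBandProjection M P)
    {A : Set Ω} (hA : MeasurableSet A) (hμA : μ A < ∞) :
    (P (indicatorConstLp p hA hμA.ne (1:ℝ)) : Ω → ℝ)
      =ᵐ[μ] (projSet P A hA hμA).indicator (fun _ => (1:ℝ)) := by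
  set e : Lp ℝ p μ := indicatorConstLp p hA hμA.ne (1:ℝ) with he
  set u : Lp ℝ p μ := P e with hu
  have he0 : (0 : Lp ℝ p μ) ≤ e := by
    rw [← Lp.coeFn_le]
    filter_upwards [Lp.coeFn_zero (E := ℝ) (p := p) (μ := μ), indicatorConstLp_coeFn (p := p)
      (hs := hA) (hμs := hμA.ne) (c := (1:ℝ))] with x h0 h1
    rw [h0, h1]
    exact Set.indicator_nonneg (fun _ _ => zero_le_one) x
  have hu0 : (0 : Lp ℝ p μ) ≤ u := (hP.2.2 e he0).1
  have hue : u ≤ e := (hP.2.2 e he0).2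
  -- the inf is zero
  have hinf : u ⊓ (e - u) = 0 := by
    apply hP.squeeze (u := e)
    · refine hM.2.2.2.1 u (hP.1 e) _ ?_
      have hw0 : (0:Lp ℝ p μ) ≤ u ⊓ (e - u) := le_inf hu0 (sub_nonneg.2 hue)
      rw [abs_of_nonneg hw0, abs_of_nonneg hu0]
      exact inf_le_left
    · exact le_inf hu0 (sub_nonneg.2 hue)
    · exact inf_le_right
  -- now pointwise
  have h1 : (⇑(u ⊓ (e - u)) : Ω → ℝ) =ᵐ[μ] ⇑(0 : Lp ℝ p μ) := by rw [hinf]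
  filter_upwards [h1, Lp.coeFn_zero (E := ℝ) (p := p) (μ := μ), Lp.coeFn_inf u (e - u),
    Lp.coeFn_sub e u, indicatorConstLp_coeFn (p := p) (hs := hA) (hμs := hμA.ne) (c := (1:ℝ)),
    (Lp.coeFn_le 0 u).2 hu0, (Lp.coeFn_le u e).2 hue,
    Lp.coeFn_zero (E := ℝ) (p := p) (μ := μ)] with x hx0 hxz hxinf hxsub hxe hxu0 hxue hxz2
  rw [hxz] at hx0
  rw [hxinf] at hx0
  simp only [Pi.inf_apply, hxsub, Pi.sub_apply] at hx0
  rw [hxz2] at hxu0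
  rw [hxe] at hxue
  simp only [Pi.zero_apply] at hx0 hxu0
  -- hx0 : u x ⊓ (e x - u x) = 0  (with e x rewritten?)
  have hproj : ∀ y : Ω, y ∈ projSet P A hA hμA ↔ (y ∈ A ∧ (1:ℝ)/2 < u y) := by
    intro y
    simp only [projSet, mem_inter_iff, mem_setOf_eq, ← he, ← hu]
  by_cases hxA : x ∈ A
  · rw [Set.indicator_of_mem hxA] at hxue
    rw [hxe, Set.indicator_of_mem hxA] at hx0
    rcases le_total (u x) (1 - u x) with hle | hle
    · have hux : u x = 0 := by
        rw [min_eq_left hle] at hx0; exact hx0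
      have hnot : x ∉ projSet P A hA hμA := by
        rw [hproj x]; rintro ⟨-, hlt⟩; rw [hux] at hlt; norm_num at hlt
      rw [Set.indicator_of_notMem hnot, hux]
    · have hux : u x = 1 := by
        rw [min_eq_right hle] at hx0; linarith
      have hmem : x ∈ projSet P A hA hμA := by
        rw [hproj x]; exact ⟨hxA, by rw [hux]; norm_num⟩
      rw [Set.indicator_of_mem hmem, hux]
  · rw [Set.indicator_of_notMem hxA] at hxue
    have hux : u x = 0 := le_antisymm hxue hxu0
    have hnot : x ∉ projSet P A hA hμA := by
      rw [hproj x]; rintro ⟨hxA', -⟩; exact hxA hxA'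
    rw [Set.indicator_of_notMem hnot, hux]

/-- `P 1_{A∩B} = 1_{A∩B} ⊓ P 1_A` -/
lemma proj_inter (hM : IsBand M) (hP : IsBandProjection M P)
    {A B : Set Ω} (hA : MeasurableSet A) (hμA : μ A < ∞)
    (hB : MeasurableSet B) :
    P (indicatorConstLp p (hA.inter hB) ((measure_mono inter_subset_left).trans_lt hμA).ne (1:ℝ))
      = indicatorConstLp p (hA.inter hB) ((measure_mono inter_subset_left).trans_lt hμA).ne (1:ℝ)
        ⊓ P (indicatorConstLp p hA hμA.ne (1:ℝ)) := by
  set eAB : Lp ℝ p μ := indicatorConstLp p (hA.inter hB)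
    ((measure_mono inter_subset_left).trans_lt hμA).ne (1:ℝ) with heAB
  set eA : Lp ℝ p μ := indicatorConstLp p hA hμA.ne (1:ℝ) with heA
  have hle : eAB ≤ eA := by
    rw [← Lp.coeFn_le]
    filter_upwards [indicatorConstLp_coeFn (p := p) (hs := hA.inter hB)
      (hμs := ((measure_mono inter_subset_left).trans_lt hμA).ne) (c := (1:ℝ)),
      indicatorConstLp_coeFn (p := p) (hs := hA) (hμs := hμA.ne) (c := (1:ℝ))] with x h1 h2
    rw [h1, h2]
    exact Set.indicator_le_indicator_of_subset inter_subset_left (fun _ => zero_le_one) x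
  have he0 : ∀ (C : Set Ω) (hC : MeasurableSet C) (hμC : μ C ≠ ∞),
      (0 : Lp ℝ p μ) ≤ indicatorConstLp p hC hμC (1:ℝ) := by
    intro C hC hμC
    rw [← Lp.coeFn_le]
    filter_upwards [Lp.coeFn_zero (E := ℝ) (p := p) (μ := μ),
      indicatorConstLp_coeFn (p := p) (hs := hC) (hμs := hμC) (c := (1:ℝ))] with x h0 h1
    rw [h0, h1]
    exact Set.indicator_nonneg (fun _ _ => zero_le_one) x
  have heAB0 : (0 : Lp ℝ p μ) ≤ eAB := he0 _ _ _
  have heA0 : (0 : Lp ℝ p μ) ≤ eA := he0 _ _ _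
  have hPA0 : (0 : Lp ℝ p μ) ≤ P eA := (hP.2.2 eA heA0).1
  have h1 : P eAB ≤ P eA := hP.mono hle
  have h2 : P eAB ≤ eAB := (hP.2.2 eAB heAB0).2
  -- lower bound
  have hwmem : eAB ⊓ P eA ∈ M := by
    refine hM.2.2.2.1 _ (hP.1 eA) _ ?_
    have hw0 : (0 : Lp ℝ p μ) ≤ eAB ⊓ P eA := le_inf heAB0 hPA0
    rw [abs_of_nonneg hw0, abs_of_nonneg hPA0]
    exact inf_le_right
  have h3 : eAB ⊓ P eA ≤ P eAB := by
    have := hP.2.1 _ hwmem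
    calc eAB ⊓ P eA = P (eAB ⊓ P eA) := this.symm
      _ ≤ P eAB := hP.mono inf_le_left
  exact le_antisymm (le_inf h2 h1) h3

lemma coeFn_proj_inter_indicator (hM : IsBand M) (hP : IsBandProjection M P)
    {A B : Set Ω} (hA : MeasurableSet A) (hμA : μ A < ∞)
    (hB : MeasurableSet B) :
    (P (indicatorConstLp p (hA.inter hB) ((measure_mono inter_subset_left).trans_lt hμA).ne (1:ℝ))
      : Ω → ℝ) =ᵐ[μ]
      fun x => ((projSet P A hA hμA) ∩ (A ∩ B)).indicator (fun _ => (1:ℝ)) x := by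
  have hμAB : μ (A ∩ B) < ∞ := (measure_mono inter_subset_left).trans_lt hμA
  rw [proj_inter hM hP hA hμA hB]
  filter_upwards [Lp.coeFn_inf (indicatorConstLp p (hA.inter hB) hμAB.ne (1:ℝ))
      (P (indicatorConstLp p hA hμA.ne (1:ℝ))),
    indicatorConstLp_coeFn (p := p) (hs := hA.inter hB) (hμs := hμAB.ne) (c := (1:ℝ)),
    coeFn_proj_indicatorConst hM hP hA hμA] with x hx1 hx2 hx3
  rw [hx1]
  simp only [Pi.inf_apply, hx2, hx3]
  by_cases hAB : x ∈ A ∩ B <;> by_cases hA' : x ∈ projSet P A hA hμA <;>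
    simp [Set.indicator_apply, hAB, hA', Set.mem_inter_iff] <;> norm_num

lemma projSet_consistent (hM : IsBand M) (hP : IsBandProjection M P)
    {A B : Set Ω} (hA : MeasurableSet A) (hμA : μ A < ∞)
    (hB : MeasurableSet B) (hμB : μ B < ∞) :
    ∀ᵐ x ∂μ.restrict (A ∩ B),
      (projSet P A hA hμA).indicator (fun _ => (1:ℝ)) x
        = (projSet P B hB hμB).indicator (fun _ => (1:ℝ)) x := by
  have hμAB : μ (A ∩ B) < ∞ := (measure_mono inter_subset_left).trans_lt hμA
  have hμBA : μ (B ∩ A) < ∞ := (measure_mono inter_subset_left).trans_lt hμB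
  have hcongr : indicatorConstLp p (hB.inter hA) hμBA.ne (1:ℝ)
      = indicatorConstLp p (hA.inter hB) hμAB.ne (1:ℝ) := by
    apply Lp.ext
    filter_upwards [indicatorConstLp_coeFn (p := p) (hs := hB.inter hA) (hμs := hμBA.ne)
      (c := (1:ℝ)), indicatorConstLp_coeFn (p := p) (hs := hA.inter hB) (hμs := hμAB.ne)
      (c := (1:ℝ))] with x h1 h2
    rw [h1, h2, inter_comm]
  have hA' := coeFn_proj_inter_indicator hM hP hA hμA hB
  have hB' := coeFn_proj_inter_indicator hM hP hB hμB hA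
  rw [hcongr] at hB'
  rw [ae_restrict_iff' (hA.inter hB)]
  filter_upwards [hA', hB'] with x h1 h2
  intro hxAB
  have h3 : ((projSet P A hA hμA) ∩ (A ∩ B)).indicator (fun _ => (1:ℝ)) x
      = ((projSet P B hB hμB) ∩ (B ∩ A)).indicator (fun _ => (1:ℝ)) x := by
    rw [← h1, ← h2]
  have e1 : ((projSet P A hA hμA) ∩ (A ∩ B)).indicator (fun _ => (1:ℝ)) x
      = (projSet P A hA hμA).indicator (fun _ => (1:ℝ)) x := by
    by_cases hx : x ∈ projSet P A hA hμA
    · rw [Set.indicator_of_mem hx, Set.indicator_of_mem (Set.mem_inter hx hxAB)]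
    · rw [Set.indicator_of_notMem hx, Set.indicator_of_notMem (fun h => hx h.1)]
  have e2 : ((projSet P B hB hμB) ∩ (B ∩ A)).indicator (fun _ => (1:ℝ)) x
      = (projSet P B hB hμB).indicator (fun _ => (1:ℝ)) x := by
    by_cases hx : x ∈ projSet P B hB hμB
    · rw [Set.indicator_of_mem hx, Set.indicator_of_mem (Set.mem_inter hx (Set.mem_inter hxAB.2 hxAB.1))]
    · rw [Set.indicator_of_notMem hx, Set.indicator_of_notMem (fun h => hx h.1)]
  rw [← e1, h3, e2]
set_option synthInstance.maxHeartbeats 1000000 in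
lemma forward_direction (hp' : p ≠ ∞) (hW : WeaklyLocalisable μ) :
    ∀ M : Set (Lp ℝ p μ), IsBand M →
      ∃ Ω₀ : Set Ω, LocallyMeasurable μ Ω₀ ∧
        ∀ P : Lp ℝ p μ →L[ℝ] Lp ℝ p μ, IsBandProjection M P →
          ∀ f : Lp ℝ p μ, (P f : Ω → ℝ) =ᵐ[μ] fun x => Ω₀.indicator (f : Ω → ℝ) x := by
  intro M hM
  by_cases hex : ∃ P : Lp ℝ p μ →L[ℝ] Lp ℝ p μ, IsBandProjection M P
  case neg =>
    exact ⟨∅, fun A hA hμA => by simpa using hA.empty.inter hA,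
      fun P hP => absurd ⟨P, hP⟩ hex⟩
  obtain ⟨P₀, hP₀⟩ := hex
  classical
  set F : Set Ω → Ω → ℝ := fun A =>
    if h : MeasurableSet A ∧ μ A < ∞ then
      (projSet P₀ A h.1 h.2).indicator (fun _ => (1:ℝ)) else 0 with hF
  have hFA : ∀ (A : Set Ω) (hA : MeasurableSet A) (hμA : μ A < ∞),
      F A = (projSet P₀ A hA hμA).indicator (fun _ => (1:ℝ)) := by
    intro A hA hμA
    rw [hF]
    simp only [dif_pos (And.intro hA hμA)]
  have hmeas : ∀ A : Set Ω, MeasurableSet A → μ A < ∞ → Measurable (A.indicator (F A)) := by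
    intro A hA hμA
    rw [hFA A hA hμA, Set.indicator_indicator]
    rw [Set.inter_eq_self_of_subset_right (projSet_subset hA hμA)]
    exact measurable_const.indicator (projSet_measurable hA hμA)
  have hcons : ∀ A B : Set Ω, MeasurableSet A → μ A < ∞ → MeasurableSet B → μ B < ∞ →
      ∀ᵐ x ∂(μ.restrict (A ∩ B)), F A x = F B x := by
    intro A B hA hμA hB hμB
    rw [hFA A hA hμA, hFA B hB hμB]
    exact projSet_consistent hM hP₀ hA hμA hB hμB
  obtain ⟨g, hg1, hg2⟩ := hW F hmeas hcons
  refine ⟨{x | g x = 1}, ?_, ?_⟩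
  · intro A hA hμA
    have hset : {x | g x = 1} ∩ A = (A.indicator g) ⁻¹' {1} ∩ A := by
      ext x
      by_cases hx : x ∈ A <;>
        simp [Set.indicator_apply, hx]
    rw [hset]
    exact ((hg1 A hA hμA) (measurableSet_singleton 1)).inter hA
  · intro P hP f
    rw [show P f = P₀ f from hP.unique hP₀ f]
    revert f
    apply Lp.induction hp'
      (motive := fun f : Lp ℝ p μ =>
        (P₀ f : Ω → ℝ) =ᵐ[μ] fun x => {x | g x = 1}.indicator (f : Ω → ℝ) x)
    · intro c s hs hμs
      rw [Lp.simpleFunc.coe_indicatorConst]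
      have hsmul : indicatorConstLp p hs hμs.ne c
          = c • indicatorConstLp p hs hμs.ne (1:ℝ) := by
        apply Lp.ext
        filter_upwards [indicatorConstLp_coeFn (p := p) (hs := hs) (hμs := hμs.ne) (c := c),
          Lp.coeFn_smul c (indicatorConstLp p hs hμs.ne (1:ℝ)),
          indicatorConstLp_coeFn (p := p) (hs := hs) (hμs := hμs.ne) (c := (1:ℝ))]
            with x h1 h2 h3
        rw [h1, h2, Pi.smul_apply, h3, smul_eq_mul]
        by_cases hx : x ∈ s <;> simp [Set.indicator_apply, hx]
      have hgs := (ae_restrict_iff' hs).mp (hg2 s hs hμs)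
      rw [hFA s hs hμs] at hgs
      rw [hsmul, _root_.map_smul]
      filter_upwards [Lp.coeFn_smul c (P₀ (indicatorConstLp p hs hμs.ne (1:ℝ))),
        coeFn_proj_indicatorConst hM hP₀ hs hμs, hgs,
        Lp.coeFn_smul c (indicatorConstLp p hs hμs.ne (1:ℝ)),
        indicatorConstLp_coeFn (p := p) (hs := hs) (hμs := hμs.ne) (c := (1:ℝ))]
          with x h1 h2 h3 h4 h5
      rw [h1, Pi.smul_apply, h2]
      by_cases hg1x : x ∈ {x | g x = 1}
      · rw [Set.indicator_of_mem hg1x, h4, Pi.smul_apply, h5]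
        by_cases hxs : x ∈ s
        · have hgx := h3 hxs
          have hx' : x ∈ projSet P₀ s hs hμs := by
            by_contra hcon
            rw [Set.indicator_of_notMem hcon] at hgx
            have hgx1 : g x = 1 := hg1x
            rw [hgx] at hgx1
            norm_num at hgx1
          rw [Set.indicator_of_mem hx', Set.indicator_of_mem hxs]
        · rw [Set.indicator_of_notMem (fun h => hxs (projSet_subset hs hμs h)),
            Set.indicator_of_notMem hxs]
      · rw [Set.indicator_of_notMem hg1x]
        by_cases hx' : x ∈ projSet P₀ s hs hμs
        · exfalso
          have hxs := projSet_subset hs hμs hx'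
          have hgx := h3 hxs
          rw [Set.indicator_of_mem hx'] at hgx
          exact hg1x hgx
        · rw [Set.indicator_of_notMem hx']
          simp
    · intro f' g' hf' hg' hdisj hQf hQg
      rw [map_add]
      filter_upwards [hQf, hQg,
        Lp.coeFn_add (P₀ (hf'.toLp f')) (P₀ (hg'.toLp g')),
        Lp.coeFn_add (hf'.toLp f') (hg'.toLp g')] with x h1 h2 h3 h4
      rw [h3, Pi.add_apply, h1, h2]
      by_cases hx : x ∈ {x | g x = 1}
      · rw [Set.indicator_of_mem hx, Set.indicator_of_mem hx, Set.indicator_of_mem hx,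
          h4, Pi.add_apply]
      · simp [Set.indicator_of_notMem hx]
    · -- closedness
      apply IsSeqClosed.isClosed
      intro Fs f hFs hlim
      have h1 : TendstoInMeasure μ (fun n => ((Fs n : Lp ℝ p μ) : Ω → ℝ)) Filter.atTop
          (f : Ω → ℝ) := tendstoInMeasure_of_tendsto_Lp hlim
      obtain ⟨ns, hns_mono, hns⟩ := h1.exists_seq_tendsto_ae
      have hlim2 : Filter.Tendsto (fun n => P₀ (Fs (ns n))) Filter.atTop (nhds (P₀ f)) :=
        (P₀.continuous.tendsto f).comp (hlim.comp hns_mono.tendsto_atTop)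
      have h2 : TendstoInMeasure μ (fun n => ((P₀ (Fs (ns n)) : Lp ℝ p μ) : Ω → ℝ))
          Filter.atTop (P₀ f : Ω → ℝ) := tendstoInMeasure_of_tendsto_Lp hlim2
      obtain ⟨ms, hms_mono, hms⟩ := h2.exists_seq_tendsto_ae
      filter_upwards [hns, hms, ae_all_iff.2 hFs] with x hx1 hx2 hx3
      have hx1' : Filter.Tendsto (fun i => ((Fs (ns (ms i)) : Lp ℝ p μ) : Ω → ℝ) x)
          Filter.atTop (nhds ((f : Ω → ℝ) x)) := hx1.comp hms_mono.tendsto_atTop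
      have hlhs : Filter.Tendsto (fun i => ((P₀ (Fs (ns (ms i))) : Lp ℝ p μ) : Ω → ℝ) x)
          Filter.atTop (nhds ({x | g x = 1}.indicator (f : Ω → ℝ) x)) := by
        have heq : (fun i => ((P₀ (Fs (ns (ms i))) : Lp ℝ p μ) : Ω → ℝ) x)
            = fun i => {x | g x = 1}.indicator ((Fs (ns (ms i)) : Lp ℝ p μ) : Ω → ℝ) x := by
          funext i
          exact hx3 (ns (ms i))
        rw [heq]
        by_cases hx : x ∈ {x | g x = 1}
        · simpa only [Set.indicator_of_mem hx] using hx1'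
        · simpa only [Set.indicator_of_notMem hx] using tendsto_const_nhds
      exact tendsto_nhds_unique hx2 hlhs
end BP


section Back
variable {Ω : Type*} [MeasurableSpace Ω] {μ : Measure Ω} {p : ℝ≥0∞} [Fact (1 ≤ p)]

lemma p_ne_zero : p ≠ 0 := (lt_of_lt_of_le zero_lt_one Fact.out).ne'

/-- superlevel sets of an Lp function -/
def Sn (f : Lp ℝ p μ) (n : ℕ) : Set Ω := {x | ((n + 1 : ℝ≥0))⁻¹ ≤ ‖(f : Ω → ℝ) x‖₊}

lemma Sn_meas (f : Lp ℝ p μ) (n : ℕ) : MeasurableSet (Sn f n) :=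
  (Lp.stronglyMeasurable f).measurable.nnnorm measurableSet_Ici

lemma Sn_finite (hp' : p ≠ ∞) (f : Lp ℝ p μ) (n : ℕ) : μ (Sn f n) < ∞ := by
  have h1 : ((n : ℝ≥0) + 1) ≠ 0 := by positivity
  exact (Lp.memLp f).meas_ge_lt_top p_ne_zero hp' (inv_ne_zero h1)

lemma Sn_cover (f : Lp ℝ p μ) {x : Ω} (hx : (f : Ω → ℝ) x ≠ 0) : ∃ n, x ∈ Sn f n := by
  have h0 : (0 : ℝ) < ‖(f : Ω → ℝ) x‖ := norm_pos_iff.2 hx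
  obtain ⟨n, hn⟩ := exists_nat_gt (‖(f : Ω → ℝ) x‖⁻¹)
  refine ⟨n, ?_⟩
  have h1 : ((n : ℝ) + 1)⁻¹ ≤ ‖(f : Ω → ℝ) x‖ :=
    inv_le_of_inv_le₀ h0 (le_of_lt (hn.trans_le (by norm_num)))
  simp only [Sn, mem_setOf_eq]
  rw [← NNReal.coe_le_coe, NNReal.coe_inv, coe_nnnorm]
  push_cast
  exact h1

lemma Sn_zero_of_forall (f : Lp ℝ p μ) {x : Ω} (hx : ∀ n, x ∉ Sn f n) : (f : Ω → ℝ) x = 0 := by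
  by_contra h
  obtain ⟨n, hn⟩ := Sn_cover f h
  exact hx n hn

variable (D : Set Ω → Set Ω)

/-- the band of functions vanishing off the pieces `D A`. -/
def MBand : Set (Lp ℝ p μ) :=
  {f | ∀ A : Set Ω, MeasurableSet A → μ A < ∞ → ∀ᵐ x ∂μ, x ∈ A \ D A → (f : Ω → ℝ) x = 0}

/-- the union of pieces associated to `f`. -/
def TT (f : Lp ℝ p μ) : Set Ω := ⋃ n, D (Sn f n)

/-- the projection at the level of functions. -/
noncomputable def phiFun (f : Lp ℝ p μ) : Ω → ℝ := (TT D f).indicator (f : Ω → ℝ)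

lemma phiFun_zero_pt {f : Lp ℝ p μ} {x : Ω} (hx : (f : Ω → ℝ) x = 0) : phiFun D f x = 0 := by
  unfold phiFun
  by_cases h : x ∈ TT D f
  · rw [Set.indicator_of_mem h, hx]
  · rw [Set.indicator_of_notMem h]

section hyps
variable (hD1 : ∀ A, D A ⊆ A)
  (hD2 : ∀ A : Set Ω, MeasurableSet A → μ A < ∞ → MeasurableSet (D A))
  (hD3 : ∀ A B : Set Ω, MeasurableSet A → μ A < ∞ → MeasurableSet B → μ B < ∞ →
    ∀ᵐ x ∂μ, x ∈ A ∩ B → (x ∈ D A ↔ x ∈ D B))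
  (hp' : p ≠ ∞)

include hD1 hD3 hp' in
/-- Key pointwise description of `phiFun` on a finite measure set. -/
lemma phiFun_eq_on (f : Lp ℝ p μ) {A : Set Ω} (hA : MeasurableSet A) (hμA : μ A < ∞) :
    ∀ᵐ x ∂μ, x ∈ A → phiFun D f x = (D A).indicator (f : Ω → ℝ) x := by
  have hae : ∀ᵐ x ∂μ, ∀ n, x ∈ (Sn f n) ∩ A → (x ∈ D (Sn f n) ↔ x ∈ D A) :=
    ae_all_iff.2 fun n => hD3 (Sn f n) A (Sn_meas f n) (Sn_finite hp' f n) hA hμA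
  filter_upwards [hae] with x hx hxA
  by_cases hfx : (f : Ω → ℝ) x = 0
  · rw [phiFun_zero_pt D hfx]
    by_cases h : x ∈ D A
    · rw [Set.indicator_of_mem h, hfx]
    · rw [Set.indicator_of_notMem h]
  · obtain ⟨n, hn⟩ := Sn_cover f hfx
    by_cases h : x ∈ D A
    · have hDn : x ∈ D (Sn f n) := (hx n ⟨hn, hxA⟩).2 h
      have hT : x ∈ TT D f := mem_iUnion.2 ⟨n, hDn⟩
      rw [Set.indicator_of_mem h]
      unfold phiFun
      rw [Set.indicator_of_mem hT]
    · have hT : x ∉ TT D f := by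
        intro hT
        simp only [TT, mem_iUnion] at hT
        obtain ⟨m, hm⟩ := hT

        have hmS : x ∈ Sn f m := hD1 _ hm
        exact h ((hx m ⟨hmS, hxA⟩).1 hm)
      rw [Set.indicator_of_notMem h]
      unfold phiFun
      rw [Set.indicator_of_notMem hT]

include hD2 hp' in
lemma phiFun_measurable (f : Lp ℝ p μ) : Measurable (phiFun D f) :=
  (Lp.stronglyMeasurable f).measurable.indicator
    (MeasurableSet.iUnion fun n => hD2 _ (Sn_meas f n) (Sn_finite hp' f n))

include hD2 hp' in
lemma phiFun_memLp (f : Lp ℝ p μ) : MemLp (phiFun D f) p μ := by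
  refine MemLp.of_le (Lp.memLp f) (phiFun_measurable D hD2 hp' f).aestronglyMeasurable ?_
  exact Filter.Eventually.of_forall fun x => norm_indicator_le_norm_self _ _

include hD1 hD3 hp' in
lemma phiFun_add (f g : Lp ℝ p μ) :
    phiFun D (f + g) =ᵐ[μ] phiFun D f + phiFun D g := by
  set A : ℕ → Set Ω := fun n => Sn f n ∪ Sn g n ∪ Sn (f + g) n with hA
  have hAm : ∀ n, MeasurableSet (A n) := fun n =>
    ((Sn_meas f n).union (Sn_meas g n)).union (Sn_meas (f + g) n)
  have hAf : ∀ n, μ (A n) < ∞ := fun n =>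
    lt_of_le_of_lt (measure_union_le _ _)
      (ENNReal.add_lt_top.2 ⟨lt_of_le_of_lt (measure_union_le _ _)
        (ENNReal.add_lt_top.2 ⟨Sn_finite hp' f n, Sn_finite hp' g n⟩), Sn_finite hp' (f + g) n⟩)
  filter_upwards [ae_all_iff.2 fun n => phiFun_eq_on D hD1 hD3 hp' f (hAm n) (hAf n),
    ae_all_iff.2 fun n => phiFun_eq_on D hD1 hD3 hp' g (hAm n) (hAf n),
    ae_all_iff.2 fun n => phiFun_eq_on D hD1 hD3 hp' (f + g) (hAm n) (hAf n),
    Lp.coeFn_add f g] with x k1 k2 k3 k4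
  by_cases hx : ∃ n, x ∈ A n
  · obtain ⟨n, hxn⟩ := hx
    rw [Pi.add_apply, k3 n hxn, k1 n hxn, k2 n hxn]
    by_cases hxD : x ∈ D (A n)
    · rw [Set.indicator_of_mem hxD, Set.indicator_of_mem hxD, Set.indicator_of_mem hxD,
        k4, Pi.add_apply]
    · rw [Set.indicator_of_notMem hxD, Set.indicator_of_notMem hxD,
        Set.indicator_of_notMem hxD, add_zero]
  · push_neg at hx
    have hf0 : (f : Ω → ℝ) x = 0 :=
      Sn_zero_of_forall f fun n hn => hx n (Or.inl (Or.inl hn))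
    have hg0 : (g : Ω → ℝ) x = 0 :=
      Sn_zero_of_forall g fun n hn => hx n (Or.inl (Or.inr hn))
    have hfg0 : ((f + g : Lp ℝ p μ) : Ω → ℝ) x = 0 :=
      Sn_zero_of_forall (f + g) fun n hn => hx n (Or.inr hn)
    rw [Pi.add_apply, phiFun_zero_pt D hf0, phiFun_zero_pt D hg0, phiFun_zero_pt D hfg0,
      add_zero]

include hD1 hD3 hp' in
lemma phiFun_smul (c : ℝ) (f : Lp ℝ p μ) :
    phiFun D (c • f) =ᵐ[μ] c • phiFun D f := by
  set A : ℕ → Set Ω := fun n => Sn f n ∪ Sn (c • f) n with hA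
  have hAm : ∀ n, MeasurableSet (A n) := fun n => (Sn_meas f n).union (Sn_meas (c • f) n)
  have hAf : ∀ n, μ (A n) < ∞ := fun n =>
    lt_of_le_of_lt (measure_union_le _ _)
      (ENNReal.add_lt_top.2 ⟨Sn_finite hp' f n, Sn_finite hp' (c • f) n⟩)
  filter_upwards [ae_all_iff.2 fun n => phiFun_eq_on D hD1 hD3 hp' f (hAm n) (hAf n),
    ae_all_iff.2 fun n => phiFun_eq_on D hD1 hD3 hp' (c • f) (hAm n) (hAf n),
    Lp.coeFn_smul c f] with x k1 k2 k3
  by_cases hx : ∃ n, x ∈ A n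
  · obtain ⟨n, hxn⟩ := hx
    rw [Pi.smul_apply, k2 n hxn, k1 n hxn]
    by_cases hxD : x ∈ D (A n)
    · rw [Set.indicator_of_mem hxD, Set.indicator_of_mem hxD, k3, Pi.smul_apply]
    · rw [Set.indicator_of_notMem hxD, Set.indicator_of_notMem hxD, smul_zero]
  · push_neg at hx
    have hf0 : (f : Ω → ℝ) x = 0 :=
      Sn_zero_of_forall f fun n hn => hx n (Or.inl hn)
    have hcf0 : ((c • f : Lp ℝ p μ) : Ω → ℝ) x = 0 :=
      Sn_zero_of_forall (c • f) fun n hn => hx n (Or.inr hn)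
    rw [Pi.smul_apply, phiFun_zero_pt D hf0, phiFun_zero_pt D hcf0, smul_zero]

/-- the projection as an element-wise map on Lp -/
noncomputable def phiLp (f : Lp ℝ p μ) : Lp ℝ p μ :=
  (phiFun_memLp D hD2 hp' f).toLp (phiFun D f)

include hD2 hp' in
lemma phiLp_coeFn (f : Lp ℝ p μ) : (phiLp D hD2 hp' f : Ω → ℝ) =ᵐ[μ] phiFun D f :=
  MemLp.coeFn_toLp _

include hD1 hD3 in
lemma phiLp_add (f g : Lp ℝ p μ) :
    phiLp D hD2 hp' (f + g) = phiLp D hD2 hp' f + phiLp D hD2 hp' g := by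
  apply Lp.ext
  filter_upwards [phiLp_coeFn D hD2 hp' (f + g), phiLp_coeFn D hD2 hp' f,
    phiLp_coeFn D hD2 hp' g, phiFun_add D hD1 hD3 hp' f g,
    Lp.coeFn_add (phiLp D hD2 hp' f) (phiLp D hD2 hp' g)] with x h1 h2 h3 h4 h5
  rw [h1, h4, h5, Pi.add_apply, Pi.add_apply, h2, h3]

include hD1 hD3 in
lemma phiLp_smul (c : ℝ) (f : Lp ℝ p μ) :
    phiLp D hD2 hp' (c • f) = c • phiLp D hD2 hp' f := by
  apply Lp.ext
  filter_upwards [phiLp_coeFn D hD2 hp' (c • f), phiLp_coeFn D hD2 hp' f,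
    phiFun_smul D hD1 hD3 hp' c f,
    Lp.coeFn_smul c (phiLp D hD2 hp' f)] with x h1 h2 h3 h4
  rw [h1, h3, h4, Pi.smul_apply, Pi.smul_apply, h2]

include hD2 hp' in
lemma phiLp_norm (f : Lp ℝ p μ) : ‖phiLp D hD2 hp' f‖ ≤ ‖f‖ := by
  rw [phiLp, Lp.norm_toLp, Lp.norm_def]
  apply ENNReal.toReal_mono (Lp.eLpNorm_ne_top f)
  apply eLpNorm_mono_ae
  exact Filter.Eventually.of_forall fun x => norm_indicator_le_norm_self _ _

/-- the projection as a continuous linear map -/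
noncomputable def phiCLM : Lp ℝ p μ →L[ℝ] Lp ℝ p μ :=
  LinearMap.mkContinuous
    { toFun := phiLp D hD2 hp'
      map_add' := phiLp_add D hD1 hD2 hD3 hp'
      map_smul' := phiLp_smul D hD1 hD2 hD3 hp' }
    1 (fun f => by simpa using phiLp_norm D hD2 hp' f)

include hD1 hD2 hD3 hp' in
lemma phiCLM_coeFn (f : Lp ℝ p μ) :
    (phiCLM D hD1 hD2 hD3 hp' f : Ω → ℝ) =ᵐ[μ] phiFun D f := phiLp_coeFn D hD2 hp' f

include hD2 in
lemma MBand_isBand : IsBand (MBand (μ := μ) (p := p) D) := by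
  refine ⟨?_, ?_, ?_, ?_, ?_⟩
  · intro A hA hμA
    filter_upwards [Lp.coeFn_zero (E := ℝ) (p := p) (μ := μ)] with x h0 _
    rw [h0]
    rfl
  · intro f hf g hg A hA hμA
    filter_upwards [hf A hA hμA, hg A hA hμA, Lp.coeFn_add f g] with x h1 h2 h3 hx
    rw [h3, Pi.add_apply, h1 hx, h2 hx, add_zero]
  · intro c f hf A hA hμA
    filter_upwards [hf A hA hμA, Lp.coeFn_smul c f] with x h1 h2 hx
    rw [h2, Pi.smul_apply, h1 hx, smul_zero]
  · intro f hf g hle A hA hμA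
    filter_upwards [hf A hA hμA, (Lp.coeFn_le |g| |f|).2 hle,
      Lp.coeFn_abs f, Lp.coeFn_abs g] with x h1 h2 h3 h4 hx
    rw [h3, h4] at h2
    rw [h1 hx, abs_zero] at h2
    exact abs_eq_zero.mp (le_antisymm h2 (abs_nonneg _))
  · intro S hS b hlub A hA hμA
    rcases S.eq_empty_or_nonempty with rfl | ⟨f₀, hf₀⟩
    · have hb0 : b = 0 := by
        have h1 : b ≤ 0 := hlub.2 fun c hc => absurd hc (notMem_empty c)
        have h2 : b ≤ b + b := hlub.2 fun c hc => absurd hc (notMem_empty c)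
        have h3 : (0 : Lp ℝ p μ) ≤ b := by rwa [le_add_iff_nonneg_left] at h2
        exact le_antisymm h1 h3
      rw [hb0]
      filter_upwards [Lp.coeFn_zero (E := ℝ) (p := p) (μ := μ)] with x h0 _
      rw [h0]
      rfl
    · have hN : MeasurableSet (A \ D A) := hA.diff (hD2 A hA hμA)
      have hbN : MemLp ((A \ D A).indicator (b : Ω → ℝ)) p μ :=
        MemLp.of_le (Lp.memLp b)
          ((Lp.stronglyMeasurable b).measurable.indicator hN).aestronglyMeasurable
          (Filter.Eventually.of_forall fun x => norm_indicator_le_norm_self _ _)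
      have hub : b - hbN.toLp _ ∈ upperBounds S := by
        intro f hfS
        rw [← Lp.coeFn_le]
        filter_upwards [Lp.coeFn_sub b (hbN.toLp _), hbN.coeFn_toLp,
          (Lp.coeFn_le f b).2 (hlub.1 hfS), hS hfS A hA hμA] with x h1 h2 h3 h4
        rw [h1, Pi.sub_apply, h2]
        by_cases hxN : x ∈ A \ D A
        · rw [Set.indicator_of_mem hxN, h4 hxN]
          simp
        · rw [Set.indicator_of_notMem hxN, sub_zero]
          exact h3
      have hbc := (Lp.coeFn_le b (b - hbN.toLp _)).2 (hlub.2 hub)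
      filter_upwards [hbc, Lp.coeFn_sub b (hbN.toLp _), hbN.coeFn_toLp,
        (Lp.coeFn_le f₀ b).2 (hlub.1 hf₀), hS hf₀ A hA hμA] with x h1 h2 h3 h4 h6 hx
      rw [h2, Pi.sub_apply, h3, Set.indicator_of_mem hx] at h1
      have hb_le : (b : Ω → ℝ) x ≤ 0 := by linarith
      have hb_ge : (0:ℝ) ≤ (b : Ω → ℝ) x := by rw [← h6 hx]; exact h4
      exact le_antisymm hb_le hb_ge

include hD1 hD2 hD3 hp' in
lemma phiCLM_isBandProjection :
    IsBandProjection (MBand (μ := μ) (p := p) D) (phiCLM D hD1 hD2 hD3 hp') := by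
  refine ⟨?_, ?_, ?_⟩
  · intro f A hA hμA
    filter_upwards [phiCLM_coeFn D hD1 hD2 hD3 hp' f,
      phiFun_eq_on D hD1 hD3 hp' f hA hμA] with x h1 h2 hx
    rw [h1, h2 hx.1, Set.indicator_of_notMem hx.2]
  · intro f hf
    apply Lp.ext
    filter_upwards [phiCLM_coeFn D hD1 hD2 hD3 hp' f,
      ae_all_iff.2 fun n => hf (Sn f n) (Sn_meas f n) (Sn_finite hp' f n)] with x h1 h2
    rw [h1]
    by_cases hfx : (f : Ω → ℝ) x = 0
    · rw [phiFun_zero_pt D hfx, hfx]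
    · obtain ⟨n, hn⟩ := Sn_cover f hfx
      by_cases hxD : x ∈ D (Sn f n)
      · have hT : x ∈ TT D f := by
          simp only [TT, mem_iUnion]
          exact ⟨n, hxD⟩
        unfold phiFun
        rw [Set.indicator_of_mem hT]
      · exact absurd (h2 n ⟨hn, hxD⟩) hfx
  · intro f hf
    have hf' := (Lp.coeFn_le 0 f).2 hf
    constructor
    · rw [← Lp.coeFn_le]
      filter_upwards [phiCLM_coeFn D hD1 hD2 hD3 hp' f, hf',
        Lp.coeFn_zero (E := ℝ) (p := p) (μ := μ)] with x h1 h2 h3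
      rw [h1, h3]
      rw [h3] at h2
      simp only [Pi.zero_apply] at h2 ⊢
      unfold phiFun
      by_cases hxT : x ∈ TT D f
      · rw [Set.indicator_of_mem hxT]
        exact h2
      · rw [Set.indicator_of_notMem hxT]
    · rw [← Lp.coeFn_le]
      filter_upwards [phiCLM_coeFn D hD1 hD2 hD3 hp' f, hf',
        Lp.coeFn_zero (E := ℝ) (p := p) (μ := μ)] with x h1 h2 h3
      rw [h1]
      rw [h3] at h2
      simp only [Pi.zero_apply] at h2
      unfold phiFun
      by_cases hxT : x ∈ TT D f
      · rw [Set.indicator_of_mem hxT]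
      · rw [Set.indicator_of_notMem hxT]
        exact h2

end hyps
end Back

lemma csSup_rat_image_lt (r : ℝ) :
    sSup ((fun q : ℚ => (q : ℝ)) '' {q : ℚ | (q : ℝ) < r}) = r := by
  obtain ⟨q0, hq0⟩ := exists_rat_lt r
  have hne : ((fun q : ℚ => (q : ℝ)) '' {q : ℚ | (q : ℝ) < r}).Nonempty := ⟨q0, ⟨q0, hq0, rfl⟩⟩
  apply le_antisymm
  · exact csSup_le hne (by rintro x ⟨q, hq, rfl⟩; exact le_of_lt hq)
  · by_contra h
    push_neg at h
    obtain ⟨q, hq1, hq2⟩ := exists_rat_btwn h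
    have : (q : ℝ) ≤ sSup ((fun q : ℚ => (q : ℝ)) '' {q : ℚ | (q : ℝ) < r}) :=
      le_csSup ⟨r, by rintro x ⟨q', hq', rfl⟩; exact le_of_lt hq'⟩ ⟨q, hq2, rfl⟩
    exact absurd (lt_of_le_of_lt this hq1) (lt_irrefl _)

lemma measurable_sSup_rat_mem {Ω : Type*} [MeasurableSpace Ω] (B : ℚ → Set Ω)
    (hB : ∀ q, MeasurableSet (B q)) :
    Measurable (fun x => sSup ((fun q : ℚ => (q : ℝ)) '' {q : ℚ | x ∈ B q})) := by
  set h : Ω → ℝ := fun x => sSup ((fun q : ℚ => (q : ℝ)) '' {q : ℚ | x ∈ B q}) with hh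
  set G : Set Ω := {x | Set.Nonempty ((fun q : ℚ => (q : ℝ)) '' {q : ℚ | x ∈ B q}) ∧
      BddAbove ((fun q : ℚ => (q : ℝ)) '' {q : ℚ | x ∈ B q})} with hG
  have hGmeas : MeasurableSet G := by
    have : G = (⋃ q : ℚ, B q) ∩ (⋃ n : ℕ, ⋂ q : {q : ℚ // (n : ℝ) < (q : ℝ)}, (B q.1)ᶜ) := by
      ext x
      simp only [hG, mem_setOf_eq, mem_inter_iff, mem_iUnion, mem_iInter, mem_compl_iff]
      constructor
      · rintro ⟨⟨y, ⟨q, hq, rfl⟩⟩, hbdd⟩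
        refine ⟨⟨q, hq⟩, ?_⟩
        obtain ⟨r, hr⟩ := hbdd
        obtain ⟨n, hn⟩ := exists_nat_ge r
        refine ⟨n, fun q' hq' => ?_⟩
        have : (q'.1 : ℝ) ≤ n := (hr ⟨q'.1, hq', rfl⟩).trans hn
        exact absurd this (not_le.2 q'.2)
      · rintro ⟨⟨q, hq⟩, n, hn⟩
        refine ⟨⟨(q : ℝ), ⟨q, hq, rfl⟩⟩, ⟨(n : ℝ), ?_⟩⟩
        rintro y ⟨q', hq', rfl⟩
        by_contra hlt
        push_neg at hlt
        exact hn ⟨q', hlt⟩ hq'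
    rw [this]
    exact (MeasurableSet.iUnion fun q => hB q).inter
      (MeasurableSet.iUnion fun n => MeasurableSet.iInter fun q => (hB q.1).compl)
  apply measurable_of_Ioi
  intro r
  have key : h ⁻¹' Ioi r =
      (G ∩ ⋃ q : {q : ℚ // r < (q : ℝ)}, B q.1) ∪ (if r < 0 then Gᶜ else ∅) := by
    ext x
    simp only [mem_preimage, mem_Ioi, mem_union, mem_inter_iff, mem_iUnion]
    by_cases hx : x ∈ G
    · obtain ⟨hne, hbdd⟩ := hx
      constructor
      · intro hr
        obtain ⟨y, ⟨q, hq, rfl⟩, hy⟩ := exists_lt_of_lt_csSup hne hr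
        exact Or.inl ⟨⟨hne, hbdd⟩, ⟨⟨q, hy⟩, hq⟩⟩
      · rintro (⟨-, ⟨q, hq⟩⟩ | hno)
        · exact lt_of_lt_of_le q.2 (le_csSup hbdd ⟨q.1, hq, rfl⟩)
        · by_cases hr : r < 0
          · rw [if_pos hr] at hno; exact absurd ⟨hne, hbdd⟩ hno
          · rw [if_neg hr] at hno; exact absurd hno (notMem_empty x)
    · have h0 : h x = 0 := by
        rw [hh]
        rcases Set.eq_empty_or_nonempty ((fun q : ℚ => (q : ℝ)) '' {q : ℚ | x ∈ B q}) with he | hne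
        · simp [he, Real.sSup_empty]
        · have : ¬ BddAbove ((fun q : ℚ => (q : ℝ)) '' {q : ℚ | x ∈ B q}) := fun hb => hx ⟨hne, hb⟩
          exact Real.sSup_of_not_bddAbove this
      rw [h0]
      constructor
      · intro hr
        right
        rw [if_pos hr]
        exact hx
      · rintro (⟨hg, -⟩ | hno)
        · exact absurd hg hx
        · by_cases hr : r < 0
          · exact hr
          · rw [if_neg hr] at hno; exact absurd hno (notMem_empty x)
  rw [key]
  refine (hGmeas.inter (MeasurableSet.iUnion fun (q : {q : ℚ // r < (q : ℝ)}) => hB q.1)).union ?_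
  by_cases hr : r < 0 <;> simp [hr, hGmeas.compl]

section Back2
variable {Ω : Type*} [MeasurableSpace Ω] {μ : Measure Ω} {p : ℝ≥0∞} [Fact (1 ≤ p)]

lemma backward_direction (hp' : p ≠ ∞)
    (H : ∀ M : Set (Lp ℝ p μ), IsBand M →
      ∃ Ω₀ : Set Ω, LocallyMeasurable μ Ω₀ ∧
        ∀ P : Lp ℝ p μ →L[ℝ] Lp ℝ p μ, IsBandProjection M P →
          ∀ f : Lp ℝ p μ, (P f : Ω → ℝ) =ᵐ[μ] fun x => Ω₀.indicator (f : Ω → ℝ) x) :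
    WeaklyLocalisable μ := by
  intro f hmeas hcons
  set D : ℚ → Set Ω → Set Ω :=
    fun q A => A ∩ {x | (q : ℝ) < A.indicator (f A) x} with hDdef
  have hD1 : ∀ q A, D q A ⊆ A := fun q A => inter_subset_left
  have hD2 : ∀ (q : ℚ) (A : Set Ω), MeasurableSet A → μ A < ∞ → MeasurableSet (D q A) :=
    fun q A hA hμA => hA.inter ((hmeas A hA hμA) measurableSet_Ioi)
  have hD3 : ∀ (q : ℚ) (A B : Set Ω), MeasurableSet A → μ A < ∞ → MeasurableSet B → μ B < ∞ →
      ∀ᵐ x ∂μ, x ∈ A ∩ B → (x ∈ D q A ↔ x ∈ D q B) := by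
    intro q A B hA hμA hB hμB
    filter_upwards [(ae_restrict_iff' (hA.inter hB)).mp (hcons A B hA hμA hB hμB)]
      with x hx hxAB
    have hfx : f A x = f B x := hx hxAB
    simp only [hDdef, mem_inter_iff, mem_setOf_eq]
    rw [Set.indicator_of_mem hxAB.1, Set.indicator_of_mem hxAB.2, hfx]
    constructor
    · rintro ⟨-, h⟩; exact ⟨hxAB.2, h⟩
    · rintro ⟨-, h⟩; exact ⟨hxAB.1, h⟩
  have key : ∀ q : ℚ, ∃ Ωq : Set Ω, LocallyMeasurable μ Ωq ∧
      ∀ (A : Set Ω) (hA : MeasurableSet A) (hμA : μ A < ∞),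
        ∀ᵐ x ∂μ, (x ∈ D q A ↔ x ∈ Ωq ∩ A) := by
    intro q
    obtain ⟨Ωq, hloc, hPq⟩ := H (MBand (D q)) (MBand_isBand (D q) (hD2 q))
    have hproj := hPq (phiCLM (D q) (hD1 q) (hD2 q) (hD3 q) hp')
      (phiCLM_isBandProjection (D q) (hD1 q) (hD2 q) (hD3 q) hp')
    refine ⟨Ωq, hloc, ?_⟩
    intro A hA hμA
    set e : Lp ℝ p μ := indicatorConstLp p hA hμA.ne (1:ℝ) with he
    filter_upwards [hproj e, phiCLM_coeFn (D q) (hD1 q) (hD2 q) (hD3 q) hp' e,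
      phiFun_eq_on (D q) (hD1 q) (hD3 q) hp' e hA hμA,
      indicatorConstLp_coeFn (p := p) (hs := hA) (hμs := hμA.ne) (c := (1:ℝ))]
      with x k1 k2 k3 k4
    have hval : Ωq.indicator (e : Ω → ℝ) x = phiFun (D q) e x := by rw [← k2, ← k1]
    constructor
    · intro hxD
      have hxA : x ∈ A := hD1 q A hxD
      have h5 : phiFun (D q) e x = 1 := by
        rw [k3 hxA, Set.indicator_of_mem hxD, k4, Set.indicator_of_mem hxA]
      refine ⟨?_, hxA⟩
      by_contra hxΩ
      rw [Set.indicator_of_notMem hxΩ, h5] at hval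
      norm_num at hval
    · rintro ⟨hxΩ, hxA⟩
      have h5 : Ωq.indicator (e : Ω → ℝ) x = 1 := by
        rw [Set.indicator_of_mem hxΩ, k4, Set.indicator_of_mem hxA]
      by_contra hxD
      rw [h5, k3 hxA, Set.indicator_of_notMem hxD] at hval
      norm_num at hval
  choose Om hloc hkey using key
  refine ⟨fun x => sSup ((fun q : ℚ => (q : ℝ)) '' {q : ℚ | x ∈ Om q}), ?_, ?_⟩
  · intro A hA hμA
    have heq : A.indicator (fun x => sSup ((fun q : ℚ => (q : ℝ)) '' {q : ℚ | x ∈ Om q}))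
        = fun x => sSup ((fun q : ℚ => (q : ℝ)) '' {q : ℚ | x ∈ Om q ∩ A}) := by
      funext x
      by_cases hx : x ∈ A
      · rw [Set.indicator_of_mem hx]
        congr 1
        ext q
        simp [hx]
      · rw [Set.indicator_of_notMem hx]
        have : {q : ℚ | x ∈ Om q ∩ A} = ∅ := by
          ext q; simp [hx]
        rw [this, image_empty, Real.sSup_empty]
    rw [heq]
    exact measurable_sSup_rat_mem _ fun q => hloc q A hA hμA
  · intro A hA hμA
    rw [ae_restrict_iff' hA]
    filter_upwards [ae_all_iff.2 fun q => hkey q A hA hμA] with x hx hxA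
    have hset : {q : ℚ | x ∈ Om q} = {q : ℚ | (q : ℝ) < f A x} := by
      ext q
      simp only [mem_setOf_eq]
      constructor
      · intro hq
        have hD := (hx q).mpr ⟨hq, hxA⟩
        have := hD.2
        simp only [mem_setOf_eq, Set.indicator_of_mem hxA] at this
        exact this
      · intro hq
        have hD : x ∈ D q A := ⟨hxA, by simp only [mem_setOf_eq, Set.indicator_of_mem hxA]; exact hq⟩
        exact ((hx q).mp hD).1
    rw [hset]
    exact csSup_rat_image_lt (f A x)
end Back2


/-- `μ` is weakly localisable iff for every band `M` in `L_p(μ)` (`1 ≤ p < ∞`) there is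
a locally measurable set `Ω₀` such that the band projection onto `M` is multiplication
by `1_{Ω₀}`. -/
theorem weaklyLocalisable_iff_bands_are_indicators {Ω : Type*} [MeasurableSpace Ω]
    (μ : Measure Ω) (p : ℝ≥0∞) [Fact (1 ≤ p)] (hp' : p ≠ ∞) :
    WeaklyLocalisable μ ↔
      ∀ M : Set (Lp ℝ p μ), IsBand M →
        ∃ Ω₀ : Set Ω, LocallyMeasurable μ Ω₀ ∧
          ∀ P : Lp ℝ p μ →L[ℝ] Lp ℝ p μ, IsBandProjection M P →
            ∀ f : Lp ℝ p μ, (P f : Ω → ℝ) =ᵐ[μ] fun x => Ω₀.indicator (f : Ω → ℝ) x := by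
  constructor
  · exact fun hW => forward_direction hp' hW
  · exact fun H => backward_direction hp' H
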